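/- An internal category A in a finitely complete category C is representably posetal (for every internal category X, the hom-category of internal functors X → A and internal natural transformations is a preorder) if and only if A is an internal poset, i.e., the pairing ⟨dom, cod⟩ : A₁ → A₀ × A₀ is a monomorphism. -/

import Mathlib

open CategoryTheory CategoryTheory.Limits

universe v u

/-- A category internal to a category `C`, presented via its (generalized-element)
composition: objects-of-objects and objects-of-morphisms with domain, codomain, identity
and a natural composition of composable generalized elements, satisfying the usual
category axioms. -/
structure InternalCat (C : Type u) [Category.{v} C] where
  Obj : C
  Mor : C
  dom : Mor ⟶ Obj
  cod : Mor ⟶ Obj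
  ident : Obj ⟶ Mor
  comp : ∀ {W : C} (g f : W ⟶ Mor), f ≫ cod = g ≫ dom → (W ⟶ Mor)
  ident_dom : ident ≫ dom = 𝟙 Obj
  ident_cod : ident ≫ cod = 𝟙 Obj
  comp_dom : ∀ {W : C} (g f : W ⟶ Mor) (h : f ≫ cod = g ≫ dom), comp g f h ≫ dom = f ≫ dom
  comp_cod : ∀ {W : C} (g f : W ⟶ Mor) (h : f ≫ cod = g ≫ dom), comp g f h ≫ cod = g ≫ cod
  comp_natural : ∀ {W' W : C} (u : W' ⟶ W) (g f : W ⟶ Mor) (h : f ≫ cod = g ≫ dom),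
    u ≫ comp g f h = comp (u ≫ g) (u ≫ f) (by rw [Category.assoc, Category.assoc, h])
  id_comp : ∀ {W : C} (f : W ⟶ Mor),
    comp (f ≫ cod ≫ ident) f (by simp [ident_dom]) = f
  comp_id : ∀ {W : C} (f : W ⟶ Mor),
    comp f (f ≫ dom ≫ ident) (by simp [ident_cod]) = f
  assoc : ∀ {W : C} (h g f : W ⟶ Mor) (hg : g ≫ cod = h ≫ dom) (gf : f ≫ cod = g ≫ dom),
    comp (comp h g hg) f (by rw [comp_dom]; exact gf) =
      comp h (comp g f gf) (by rw [comp_cod]; exact hg)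

/-- An internal functor between internal categories. -/
structure InternalFunctor {C : Type u} [Category.{v} C] (X A : InternalCat C) where
  f0 : X.Obj ⟶ A.Obj
  f1 : X.Mor ⟶ A.Mor
  dom_comm : f1 ≫ A.dom = X.dom ≫ f0
  cod_comm : f1 ≫ A.cod = X.cod ≫ f0
  ident_comm : X.ident ≫ f1 = f0 ≫ A.ident
  comp_comm : ∀ {W : C} (g f : W ⟶ X.Mor) (h : f ≫ X.cod = g ≫ X.dom),
    X.comp g f h ≫ f1 = A.comp (g ≫ f1) (f ≫ f1)
      (by rw [Category.assoc, Category.assoc, cod_comm, dom_comm, ← Category.assoc,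
        ← Category.assoc, h])

/-- An internal natural transformation between internal functors. -/
structure InternalNatTrans {C : Type u} [Category.{v} C] {X A : InternalCat C}
    (F G : InternalFunctor X A) where
  app : X.Obj ⟶ A.Mor
  app_dom : app ≫ A.dom = F.f0
  app_cod : app ≫ A.cod = G.f0
  naturality :
    A.comp (G.f1) (X.dom ≫ app)
        (by rw [Category.assoc, app_cod, G.dom_comm]) =
      A.comp (X.cod ≫ app) (F.f1)
        (by rw [F.cod_comm, Category.assoc, app_dom])


theorem InternalCat.comp_congr {C : Type u} [Category.{v} C] (A : InternalCat C) {W : C}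
    {g f g' f' : W ⟶ A.Mor} (hg : g = g') (hf : f = f')
    (h : f ≫ A.cod = g ≫ A.dom) (h' : f' ≫ A.cod = g' ≫ A.dom) :
    A.comp g f h = A.comp g' f' h' := by
  subst hg; subst hf; rfl

theorem InternalCat.comp_eq_left {C : Type u} [Category.{v} C] (A : InternalCat C) {V : C}
    (i w : V ⟶ A.Mor) (hi : i = w ≫ A.cod ≫ A.ident)
    (h : w ≫ A.cod = i ≫ A.dom) : A.comp i w h = w := by
  subst hi; exact A.id_comp w

theorem InternalCat.comp_eq_right {C : Type u} [Category.{v} C] (A : InternalCat C) {V : C}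
    (i w : V ⟶ A.Mor) (hi : i = w ≫ A.dom ≫ A.ident)
    (h : i ≫ A.cod = w ≫ A.dom) : A.comp w i h = w := by
  subst hi; exact A.comp_id w

/-- The discrete internal category on an object `W`. -/
def discreteInternal {C : Type u} [Category.{v} C] (W : C) : InternalCat C where
  Obj := W
  Mor := W
  dom := 𝟙 W
  cod := 𝟙 W
  ident := 𝟙 W
  comp := fun g f _ => f
  ident_dom := by simp
  ident_cod := by simp
  comp_dom := fun _ _ _ => rfl
  comp_cod := fun g f h => h
  comp_natural := fun _ _ _ _ => rfl
  id_comp := fun _ => rfl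
  comp_id := fun f => by simp
  assoc := fun _ _ _ _ _ => rfl

theorem InternalCat.ident_cod_ident {C : Type u} [Category.{v} C] (A : InternalCat C) :
    A.ident ≫ A.cod ≫ A.ident = A.ident := by
  rw [← Category.assoc, A.ident_cod, Category.id_comp]

/-- The constant internal functor from the discrete internal category on `W` determined by
a generalized element `e : W ⟶ A.Obj`. -/
def constFunctor {C : Type u} [Category.{v} C] (A : InternalCat C) {W : C}
    (e : W ⟶ A.Obj) : InternalFunctor (discreteInternal W) A where
  f0 := e
  f1 := e ≫ A.ident
  dom_comm := by
    show (e ≫ A.ident) ≫ A.dom = 𝟙 W ≫ e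
    rw [Category.assoc, A.ident_dom, Category.comp_id, Category.id_comp]
  cod_comm := by
    show (e ≫ A.ident) ≫ A.cod = 𝟙 W ≫ e
    rw [Category.assoc, A.ident_cod, Category.comp_id, Category.id_comp]
  ident_comm := by
    show 𝟙 W ≫ e ≫ A.ident = e ≫ A.ident
    rw [Category.id_comp]
  comp_comm := by
    intro V g f h
    obtain rfl : f = g := by exact (Category.comp_id f).symm.trans (h.trans (Category.comp_id g))
    show f ≫ e ≫ A.ident = A.comp (f ≫ e ≫ A.ident) (f ≫ e ≫ A.ident) _
    refine (A.comp_eq_left _ _ ?_ _).symm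
    simp only [Category.assoc]
    exact congrArg (fun t => f ≫ t)
      (by rw [Category.assoc, A.ident_cod_ident] : (e ≫ A.ident) ≫ A.cod ≫ A.ident = e ≫ A.ident).symm

/-- The constant internal natural transformation determined by a generalized element
`w : W ⟶ A.Mor`. -/
def constTrans {C : Type u} [Category.{v} C] (A : InternalCat C) {W : C}
    (u w : W ⟶ A.Mor) (hwd : w ≫ A.dom = u ≫ A.dom) (hwc : w ≫ A.cod = u ≫ A.cod) :
    InternalNatTrans (constFunctor A (u ≫ A.dom)) (constFunctor A (u ≫ A.cod)) where
  app := w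
  app_dom := hwd
  app_cod := hwc
  naturality := by
    refine (A.comp_eq_left _ _ ?_ _).trans (A.comp_eq_right _ _ ?_ _).symm
    · show (u ≫ A.cod) ≫ A.ident = (𝟙 W ≫ w) ≫ A.cod ≫ A.ident
      rw [Category.id_comp, ← Category.assoc, hwc]
    · show (u ≫ A.dom) ≫ A.ident = (𝟙 W ≫ w) ≫ A.dom ≫ A.ident
      rw [Category.id_comp, ← Category.assoc, hwd]

/-- An internal category `A` in a finitely complete category `C` is representably posetal
(every hom-category of internal functors into `A` and internal natural transformations is
a preorder) if and only if `A` is an internal poset, i.e. `⟨dom, cod⟩ : A₁ ⟶ A₀ × A₀` is a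
monomorphism. -/
theorem representably_posetal_iff_internal_poset {C : Type u} [Category.{v} C]
    [HasFiniteLimits C] (A : InternalCat C) :
    (∀ (X : InternalCat C) (F G : InternalFunctor X A)
      (τ τ' : InternalNatTrans F G), τ = τ') ↔
    Mono (prod.lift A.dom A.cod) := by
  constructor
  · intro hpos
    constructor
    intro W u v huv
    have hd : u ≫ A.dom = v ≫ A.dom := by
      have := congrArg (fun t => t ≫ (prod.fst : A.Obj ⨯ A.Obj ⟶ A.Obj)) huv
      simp at this
      exact (prod.lift_fst _ _).symm.trans (this.trans (prod.lift_fst _ _))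
    have hc : u ≫ A.cod = v ≫ A.cod := by
      have := congrArg (fun t => t ≫ (prod.snd : A.Obj ⨯ A.Obj ⟶ A.Obj)) huv
      simp at this
      exact (prod.lift_snd _ _).symm.trans (this.trans (prod.lift_snd _ _))
    have := hpos (discreteInternal W) (constFunctor A (u ≫ A.dom)) (constFunctor A (u ≫ A.cod))
      (constTrans A u u rfl rfl) (constTrans A u v hd.symm hc.symm)
    exact congrArg InternalNatTrans.app this
  · intro hmono X F G τ τ'
    have happ : τ.app = τ'.app := by
      rw [← cancel_mono (prod.lift A.dom A.cod)]
      apply Limits.prod.hom_ext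
      · simp [τ.app_dom, τ'.app_dom]
        exact (prod.lift_fst _ _).trans (prod.lift_fst _ _).symm
      · simp [τ.app_cod, τ'.app_cod]
        exact (prod.lift_snd _ _).trans (prod.lift_snd _ _).symm
    cases τ; cases τ'
    simp_all
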